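/- Let M, N ∈ R^{d×d} with ‖M − N‖_max := max_{ij}|M_{ij} − N_{ij}| ≤ ε, and let ξ ≥ 0, s ∈ N. For any u ∈ R^d with ‖u_{S^c}‖₁ ≤ ξ‖u_S‖₁ for some |S| ≤ s, it holds |uᵀMu − uᵀNu| ≤ ε(1+ξ)² ‖u_S‖₁² ≤ ε(1+ξ)² s ‖u_S‖₂². Consequently, if the restricted eigenvalue RE_N(s,ξ) = min over such S, u of uᵀNu/‖u_S‖₂² satisfies RE_N(s,ξ) ≥ δ and ε(1+ξ)² s ≤ (1−κ)δ for some κ ∈ (0,1), then RE_M(s,ξ) ≥ κδ. -/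

import Mathlib

open Matrix Finset

/-- Restricted-eigenvalue perturbation: if ‖M − N‖_max ≤ ε then on the cone
‖u_{S^c}‖₁ ≤ ξ‖u_S‖₁ (|S| ≤ s) one has
|uᵀMu − uᵀNu| ≤ ε(1+ξ)²‖u_S‖₁² ≤ ε(1+ξ)² s ‖u_S‖₂²; consequently if
RE_N(s,ξ) ≥ δ and ε(1+ξ)² s ≤ (1−κ)δ with κ ∈ (0,1), then RE_M(s,ξ) ≥ κδ. -/
theorem re_perturbation (d s : ℕ) (M N : Matrix (Fin d) (Fin d) ℝ) (ε ξ : ℝ)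
    (hε : 0 ≤ ε) (hξ : 0 ≤ ξ)
    (hMN : ∀ i j, |M i j - N i j| ≤ ε) :
    (∀ S : Finset (Fin d), S.card ≤ s → ∀ u : Fin d → ℝ,
        (∑ j ∈ Sᶜ, |u j|) ≤ ξ * ∑ j ∈ S, |u j| →
        |u ⬝ᵥ M.mulVec u - u ⬝ᵥ N.mulVec u| ≤ ε * (1 + ξ) ^ 2 * (∑ j ∈ S, |u j|) ^ 2
        ∧ ε * (1 + ξ) ^ 2 * (∑ j ∈ S, |u j|) ^ 2
            ≤ ε * (1 + ξ) ^ 2 * s * (∑ j ∈ S, u j ^ 2))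
    ∧ ∀ δ κ : ℝ, 0 < κ → κ < 1 →
        (∀ S : Finset (Fin d), S.card ≤ s → ∀ u : Fin d → ℝ, u ≠ 0 →
          (∑ j ∈ Sᶜ, |u j|) ≤ ξ * ∑ j ∈ S, |u j| →
          δ * (∑ j ∈ S, u j ^ 2) ≤ u ⬝ᵥ N.mulVec u) →
        ε * (1 + ξ) ^ 2 * s ≤ (1 - κ) * δ →
        ∀ S : Finset (Fin d), S.card ≤ s → ∀ u : Fin d → ℝ, u ≠ 0 →
          (∑ j ∈ Sᶜ, |u j|) ≤ ξ * ∑ j ∈ S, |u j| →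
          κ * δ * (∑ j ∈ S, u j ^ 2) ≤ u ⬝ᵥ M.mulVec u := by
  -- global bound |uᵀ(M-N)u| ≤ ε (∑ |u|)^2
  have key : ∀ u : Fin d → ℝ,
      |u ⬝ᵥ M.mulVec u - u ⬝ᵥ N.mulVec u| ≤ ε * (∑ j, |u j|) ^ 2 := by
    intro u
    have hdiff : u ⬝ᵥ M.mulVec u - u ⬝ᵥ N.mulVec u
        = ∑ i, ∑ j, u i * (M i j - N i j) * u j := by
      simp only [dotProduct, mulVec, Finset.mul_sum, ← Finset.sum_sub_distrib]
      congr 1; ext i; congr 1; ext j; ring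
    rw [hdiff]
    calc |∑ i, ∑ j, u i * (M i j - N i j) * u j|
        ≤ ∑ i, ∑ j, |u i * (M i j - N i j) * u j| := by
          refine (Finset.abs_sum_le_sum_abs _ _).trans ?_
          exact Finset.sum_le_sum fun i _ => Finset.abs_sum_le_sum_abs _ _
      _ ≤ ∑ i, ∑ j, |u i| * ε * |u j| := by
          refine Finset.sum_le_sum fun i _ => Finset.sum_le_sum fun j _ => ?_
          rw [abs_mul, abs_mul]
          exact mul_le_mul_of_nonneg_right
            (mul_le_mul_of_nonneg_left (hMN i j) (abs_nonneg _)) (abs_nonneg _)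
      _ = ε * (∑ j, |u j|) ^ 2 := by
          rw [sq, Finset.sum_mul_sum, Finset.mul_sum]
          simp_rw [Finset.mul_sum]
          exact Finset.sum_congr rfl fun i _ => Finset.sum_congr rfl fun j _ => by ring
  -- part 1
  have part1 : ∀ S : Finset (Fin d), S.card ≤ s → ∀ u : Fin d → ℝ,
      (∑ j ∈ Sᶜ, |u j|) ≤ ξ * ∑ j ∈ S, |u j| →
      |u ⬝ᵥ M.mulVec u - u ⬝ᵥ N.mulVec u| ≤ ε * (1 + ξ) ^ 2 * (∑ j ∈ S, |u j|) ^ 2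
      ∧ ε * (1 + ξ) ^ 2 * (∑ j ∈ S, |u j|) ^ 2
          ≤ ε * (1 + ξ) ^ 2 * s * (∑ j ∈ S, u j ^ 2) := by
    intro S hS u hu
    have hSnn : (0:ℝ) ≤ ∑ j ∈ S, |u j| := Finset.sum_nonneg fun j _ => abs_nonneg _
    have hsplit : (∑ j, |u j|) = (∑ j ∈ S, |u j|) + ∑ j ∈ Sᶜ, |u j| :=
      (Finset.sum_add_sum_compl S _).symm
    have hl1 : (∑ j, |u j|) ≤ (1 + ξ) * ∑ j ∈ S, |u j| := by
      rw [hsplit]; nlinarith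
    have hl1sq : (∑ j, |u j|) ^ 2 ≤ (1 + ξ) ^ 2 * (∑ j ∈ S, |u j|) ^ 2 := by
      rw [← mul_pow]
      exact pow_le_pow_left₀ (Finset.sum_nonneg fun j _ => abs_nonneg _) hl1 2
    constructor
    · calc |u ⬝ᵥ M.mulVec u - u ⬝ᵥ N.mulVec u| ≤ ε * (∑ j, |u j|) ^ 2 := key u
        _ ≤ ε * ((1 + ξ) ^ 2 * (∑ j ∈ S, |u j|) ^ 2) :=
          mul_le_mul_of_nonneg_left hl1sq hε
        _ = ε * (1 + ξ) ^ 2 * (∑ j ∈ S, |u j|) ^ 2 := by ring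
    · have hcs : (∑ j ∈ S, |u j|) ^ 2 ≤ S.card * ∑ j ∈ S, u j ^ 2 := by
        have := sq_sum_le_card_mul_sum_sq (s := S) (f := fun j => |u j|)
        simpa [sq_abs] using this
      have : (∑ j ∈ S, |u j|) ^ 2 ≤ (s : ℝ) * ∑ j ∈ S, u j ^ 2 := by
        refine hcs.trans (mul_le_mul_of_nonneg_right ?_ ?_)
        · exact_mod_cast hS
        · exact Finset.sum_nonneg fun j _ => sq_nonneg _
      calc ε * (1 + ξ) ^ 2 * (∑ j ∈ S, |u j|) ^ 2
          ≤ ε * (1 + ξ) ^ 2 * ((s : ℝ) * ∑ j ∈ S, u j ^ 2) := by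
            refine mul_le_mul_of_nonneg_left this (by positivity)
        _ = ε * (1 + ξ) ^ 2 * s * (∑ j ∈ S, u j ^ 2) := by ring
  refine ⟨part1, ?_⟩
  intro δ κ hκ0 hκ1 hRE hεs S hS u hu hcone
  obtain ⟨h1, h2⟩ := part1 S hS u hcone
  have hQ : (0:ℝ) ≤ ∑ j ∈ S, u j ^ 2 := Finset.sum_nonneg fun j _ => sq_nonneg _
  have hδ : 0 ≤ δ := by nlinarith [mul_nonneg (mul_nonneg hε (sq_nonneg (1+ξ))) (Nat.cast_nonneg (α := ℝ) s)]
  have hlb : u ⬝ᵥ N.mulVec u - ε * (1 + ξ) ^ 2 * s * (∑ j ∈ S, u j ^ 2) ≤ u ⬝ᵥ M.mulVec u := by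
    have := abs_le.mp (h1.trans h2)  -- wrong direction? h1 bound, then h2
    linarith [this.1]
  have hN := hRE S hS u hu hcone
  nlinarith [mul_le_mul_of_nonneg_right hεs hQ]
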